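/- Let V be a finite set of n voters, where each voter i votes for a single party top(i) belonging to a finite set of parties C and has a price p_i ≥ 0, and let T ∈ ℕ be a threshold. For a set of parties D ⊆ C let V_D = {i ∈ V : top(i) ∈ D}, and for W ⊆ V_D and a party c_j ∈ D let r_j(W) = |{i ∈ V : top(i) = c_j and i ∉ W}|. Define H(D,ℓ,d,a) ∈ ℝ≥0 ∪ {∞} as the infimum of Σ_{i∈W} p_i over all W ⊆ V_D with |W| = ℓ for which there exist nonnegative integers (d_j) indexed by the parties c_j ∈ D with Σ_j d_j = d and Σ over those c_j ∈ D with r_j(W)+d_j ≥ T of (r_j(W)+d_j) equal to a (with H = ∞ if no such W exists). Then for every D ⊆ C and every party c_j ∈ C∖D: H(D∪{c_j}, ℓ, d, a) = min over integers 0 ≤ ℓ' ≤ ℓ, 0 ≤ d' ≤ d, 0 ≤ a' ≤ a of H(D,ℓ',d',a') + H({c_j}, ℓ−ℓ', d−d', a−a'), with the conventions ∞ + x = ∞ and that the minimum over an empty set is ∞. -/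
import Mathlib


open Finset

namespace Stmt11

/-- The number of remaining votes of party `c`: voters voting for `c` that are not
in the bribed set `W`. -/
def remVotes {V C : Type*} [Fintype V] [DecidableEq V] [DecidableEq C]
    (top : V → C) (W : Finset V) (c : C) : ℕ :=
  (Finset.univ.filter fun i : V => top i = c ∧ i ∉ W).card

/-- `H(D,ℓ,d,a)`: the least price of an undetermined bribe `W ⊆ V_D` with `|W| = ℓ`
such that `d` additional votes can be distributed among the parties of `D` so that the
total active vote count (threshold `T`) is `a` (as an extended real; `⊤` if impossible). -/
noncomputable def H {V C : Type*} [Fintype V] [DecidableEq V] [DecidableEq C]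
    (top : V → C) (p : V → ℝ) (T : ℕ) (D : Finset C) (ℓ d a : ℕ) : EReal :=
  sInf { x : EReal | ∃ W : Finset V, (∀ i ∈ W, top i ∈ D) ∧ W.card = ℓ ∧
    (∃ dd : C → ℕ, (∑ c ∈ D, dd c) = d ∧
      (∑ c ∈ D.filter (fun c => T ≤ remVotes top W c + dd c),
        (remVotes top W c + dd c)) = a) ∧
    x = ((∑ i ∈ W, p i : ℝ) : EReal) }

section Aux
variable {V C : Type*} [Fintype V] [DecidableEq V] [DecidableEq C]

def Hset (top : V → C) (p : V → ℝ) (T : ℕ) (D : Finset C) (ℓ d a : ℕ) : Set EReal :=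
  { x : EReal | ∃ W : Finset V, (∀ i ∈ W, top i ∈ D) ∧ W.card = ℓ ∧
    (∃ dd : C → ℕ, (∑ c ∈ D, dd c) = d ∧
      (∑ c ∈ D.filter (fun c => T ≤ remVotes top W c + dd c),
        (remVotes top W c + dd c)) = a) ∧
    x = ((∑ i ∈ W, p i : ℝ) : EReal) }

lemma H_eq (top : V → C) (p : V → ℝ) (T : ℕ) (D : Finset C) (ℓ d a : ℕ) :
    H top p T D ℓ d a = sInf (Hset top p T D ℓ d a) := rfl

lemma Hset_finite (top : V → C) (p : V → ℝ) (T : ℕ) (D : Finset C) (ℓ d a : ℕ) :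
    (Hset top p T D ℓ d a).Finite := by
  apply (Set.finite_range (fun W : Finset V => ((∑ i ∈ W, p i : ℝ) : EReal))).subset
  rintro x ⟨W, _, _, _, rfl⟩
  exact ⟨W, rfl⟩

lemma Hset_sInf_ne_bot (top : V → C) (p : V → ℝ) (T : ℕ) (D : Finset C) (ℓ d a : ℕ) :
    sInf (Hset top p T D ℓ d a) ≠ ⊥ := by
  rcases Set.eq_empty_or_nonempty (Hset top p T D ℓ d a) with h | h
  · rw [h, sInf_empty]; simp
  · obtain ⟨W, _, _, _, hx⟩ := h.csInf_mem (Hset_finite top p T D ℓ d a)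
    rw [hx]; exact EReal.coe_ne_bot _

lemma remVotes_congr (top : V → C) {W W' : Finset V} (c' : C)
    (h1 : W' ⊆ W) (h2 : ∀ i ∈ W, top i = c' → i ∈ W') :
    remVotes top W' c' = remVotes top W c' := by
  unfold remVotes
  congr 1
  apply Finset.filter_congr
  intro i _
  constructor
  · rintro ⟨ht, hni⟩; exact ⟨ht, fun hi => hni (h2 i hi ht)⟩
  · rintro ⟨ht, hni⟩; exact ⟨ht, fun hi => hni (h1 hi)⟩

lemma combine (top : V → C) (p : V → ℝ) (T : ℕ) (D : Finset C) (c : C) (hc : c ∉ D)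
    {ℓ d a ℓ' d' a' : ℕ} (hℓ : ℓ' ≤ ℓ) (hd : d' ≤ d) (ha : a' ≤ a)
    {x₁ x₂ : EReal} (h1 : x₁ ∈ Hset top p T D ℓ' d' a')
    (h2 : x₂ ∈ Hset top p T {c} (ℓ - ℓ') (d - d') (a - a')) :
    x₁ + x₂ ∈ Hset top p T (insert c D) ℓ d a := by
  obtain ⟨W₁, hW₁D, hW₁card, ⟨dd₁, hdd₁, ha₁⟩, rfl⟩ := h1
  obtain ⟨W₂, hW₂c, hW₂card, ⟨dd₂, hdd₂, ha₂⟩, rfl⟩ := h2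
  have hW₂c' : ∀ i ∈ W₂, top i = c := fun i hi => Finset.mem_singleton.mp (hW₂c i hi)
  have hdisj : Disjoint W₁ W₂ := by
    rw [Finset.disjoint_left]
    intro i hi1 hi2
    exact hc ((hW₂c' i hi2) ▸ hW₁D i hi1)
  set W := W₁ ∪ W₂ with hW
  set dd : C → ℕ := fun x => if x = c then dd₂ c else dd₁ x with hdd
  have hrem : ∀ x ∈ D, remVotes top W x = remVotes top W₁ x := by
    intro x hx
    refine (remVotes_congr top x Finset.subset_union_left ?_).symm
    intro i hi ht
    rcases Finset.mem_union.mp hi with h | h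
    · exact h
    · have hxc : x = c := by rw [← ht, hW₂c' i h]
      exact absurd (hxc ▸ hx) hc
  have hremc : remVotes top W c = remVotes top W₂ c := by
    refine (remVotes_congr top c Finset.subset_union_right ?_).symm
    intro i hi ht
    rcases Finset.mem_union.mp hi with h | h
    · exact absurd (by rw [← ht]; exact hW₁D i h) hc
    · exact h
  have hddD : ∀ x ∈ D, dd x = dd₁ x := by
    intro x hx
    simp only [hdd]
    rw [if_neg (fun h : x = c => hc (h ▸ hx))]
  refine ⟨W, ?_, ?_, ⟨dd, ?_, ?_⟩, ?_⟩
  · intro i hi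
    rcases Finset.mem_union.mp hi with h | h
    · exact Finset.mem_insert_of_mem (hW₁D i h)
    · exact (hW₂c' i h) ▸ Finset.mem_insert_self _ _
  · rw [Finset.card_union_of_disjoint hdisj, hW₁card, hW₂card]
    omega
  · rw [Finset.sum_insert hc, Finset.sum_congr rfl hddD, hdd₁]
    simp only [hdd, if_pos rfl]
    have : dd₂ c = d - d' := by rwa [Finset.sum_singleton] at hdd₂
    omega
  · rw [Finset.insert_eq, Finset.filter_union, Finset.sum_union]
    · have hD : (∑ x ∈ D.filter (fun x => T ≤ remVotes top W x + dd x),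
          (remVotes top W x + dd x)) = a' := by
        rw [← ha₁]
        rw [Finset.filter_congr (fun x hx => by rw [hrem x hx, hddD x hx])]
        exact Finset.sum_congr rfl (fun x hx => by
          rw [hrem x (Finset.mem_of_mem_filter x hx), hddD x (Finset.mem_of_mem_filter x hx)])
      have hC : (∑ x ∈ ({c} : Finset C).filter (fun x => T ≤ remVotes top W x + dd x),
          (remVotes top W x + dd x)) = a - a' := by
        rw [← ha₂]
        have hx : ∀ x ∈ ({c} : Finset C), remVotes top W x + dd x = remVotes top W₂ x + dd₂ x := by
          intro x hx
          rw [Finset.mem_singleton] at hx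
          subst hx
          rw [hremc]
          simp [hdd]
        rw [Finset.filter_congr (fun x hxx => by rw [hx x hxx])]
        exact Finset.sum_congr rfl (fun x hxx => hx x (Finset.mem_of_mem_filter x hxx))
      rw [hD, hC]
      omega
    · exact Finset.disjoint_filter_filter (Finset.disjoint_singleton_left.mpr hc)
  · rw [Finset.sum_union hdisj, EReal.coe_add]

lemma splitmem (top : V → C) (p : V → ℝ) (T : ℕ) (D : Finset C) (c : C) (hc : c ∉ D)
    {ℓ d a : ℕ} {x : EReal} (h : x ∈ Hset top p T (insert c D) ℓ d a) :
    ∃ ℓ' ≤ ℓ, ∃ d' ≤ d, ∃ a' ≤ a, ∃ x₁ ∈ Hset top p T D ℓ' d' a',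
      ∃ x₂ ∈ Hset top p T {c} (ℓ - ℓ') (d - d') (a - a'), x = x₁ + x₂ := by
  obtain ⟨W, hWmem, hWcard, ⟨dd, hdd, hA⟩, rfl⟩ := h
  set W₁ := W.filter (fun i => top i ∈ D) with hW₁
  set W₂ := W.filter (fun i => top i = c) with hW₂
  have hdisj : Disjoint W₁ W₂ := by
    rw [Finset.disjoint_left]
    intro i hi1 hi2
    exact hc ((Finset.mem_filter.mp hi2).2 ▸ (Finset.mem_filter.mp hi1).2)
  have hWU : W = W₁ ∪ W₂ := by
    rw [hW₁, hW₂, ← Finset.filter_or]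
    refine (Finset.filter_true_of_mem ?_).symm
    intro i hi
    rcases Finset.mem_insert.mp (hWmem i hi) with h | h
    · exact Or.inr h
    · exact Or.inl h
  have hrem1 : ∀ x ∈ D, remVotes top W₁ x = remVotes top W x := by
    intro x hx
    refine remVotes_congr top x (Finset.filter_subset _ _) ?_
    intro i hi ht
    exact Finset.mem_filter.mpr ⟨hi, ht ▸ hx⟩
  have hrem2 : remVotes top W₂ c = remVotes top W c := by
    refine remVotes_congr top c (Finset.filter_subset _ _) ?_
    intro i hi ht
    exact Finset.mem_filter.mpr ⟨hi, ht⟩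
  have hcard : ℓ = W₁.card + W₂.card := by
    rw [← hWcard, hWU, Finset.card_union_of_disjoint hdisj]
  have hdsum : d = dd c + ∑ x ∈ D, dd x := by
    rw [← hdd, Finset.sum_insert hc]
  have hasum : a = (∑ x ∈ ({c} : Finset C).filter (fun x => T ≤ remVotes top W x + dd x),
      (remVotes top W x + dd x)) +
      (∑ x ∈ D.filter (fun x => T ≤ remVotes top W x + dd x), (remVotes top W x + dd x)) := by
    rw [← hA, Finset.insert_eq, Finset.filter_union, Finset.sum_union
      (Finset.disjoint_filter_filter (Finset.disjoint_singleton_left.mpr hc))]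
  refine ⟨W₁.card, by omega, ∑ x ∈ D, dd x, by omega,
    ∑ x ∈ D.filter (fun x => T ≤ remVotes top W x + dd x), (remVotes top W x + dd x), by omega,
    ((∑ i ∈ W₁, p i : ℝ) : EReal), ?_, ((∑ i ∈ W₂, p i : ℝ) : EReal), ?_, ?_⟩
  · refine ⟨W₁, fun i hi => (Finset.mem_filter.mp hi).2, rfl, ⟨dd, rfl, ?_⟩, rfl⟩
    rw [Finset.filter_congr (fun x hx => by rw [hrem1 x hx])]
    exact Finset.sum_congr rfl (fun x hx => by rw [hrem1 x (Finset.mem_of_mem_filter x hx)])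
  · refine ⟨W₂, fun i hi => Finset.mem_singleton.mpr (Finset.mem_filter.mp hi).2,
      by omega, ⟨dd, ?_, ?_⟩, rfl⟩
    · rw [Finset.sum_singleton]; omega
    · have hx : ∀ x ∈ ({c} : Finset C), remVotes top W₂ x + dd x = remVotes top W x + dd x := by
        intro x hx
        rw [Finset.mem_singleton] at hx
        subst hx
        rw [hrem2]
      rw [Finset.filter_congr (fun x hxx => by rw [hx x hxx])]
      rw [Finset.sum_congr rfl (fun x hxx => hx x (Finset.mem_of_mem_filter x hxx))]
      omega
  · rw [hWU, Finset.sum_union hdisj, EReal.coe_add]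

end Aux

/-- the separability identity of the dynamic program:
`H(D∪{c}, ℓ, d, a) = min_{ℓ'≤ℓ, d'≤d, a'≤a} H(D,ℓ',d',a') + H({c}, ℓ−ℓ', d−d', a−a')`. -/
theorem stmt_11 {V C : Type*} [Fintype V] [DecidableEq V] [DecidableEq C]
    (top : V → C) (p : V → ℝ) (hp : ∀ i, 0 ≤ p i) (T : ℕ)
    (D : Finset C) (c : C) (hc : c ∉ D) (ℓ d a : ℕ) :
    H top p T (insert c D) ℓ d a =
      ⨅ ℓ' ∈ Finset.range (ℓ + 1), ⨅ d' ∈ Finset.range (d + 1),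
        ⨅ a' ∈ Finset.range (a + 1),
          H top p T D ℓ' d' a' + H top p T {c} (ℓ - ℓ') (d - d') (a - a') := by
  rw [H_eq]
  apply le_antisymm
  · refine le_iInf₂ fun ℓ' hℓ' => le_iInf₂ fun d' hd' => le_iInf₂ fun a' ha' => ?_
    rw [Finset.mem_range, Nat.lt_succ_iff] at hℓ' hd' ha'
    rw [H_eq, H_eq]
    rcases Set.eq_empty_or_nonempty (Hset top p T D ℓ' d' a') with h1 | h1
    · rw [h1, sInf_empty, EReal.top_add_of_ne_bot (Hset_sInf_ne_bot top p T {c} _ _ _)]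
      exact le_top
    · rcases Set.eq_empty_or_nonempty (Hset top p T {c} (ℓ-ℓ') (d-d') (a-a')) with h2 | h2
      · rw [h2, sInf_empty, EReal.add_top_of_ne_bot (Hset_sInf_ne_bot top p T D _ _ _)]
        exact le_top
      · exact sInf_le (combine top p T D c hc hℓ' hd' ha'
          (h1.csInf_mem (Hset_finite top p T D ℓ' d' a'))
          (h2.csInf_mem (Hset_finite top p T {c} _ _ _)))
  · refine le_sInf fun x hx => ?_
    obtain ⟨ℓ', hℓ', d', hd', a', ha', x₁, hx₁, x₂, hx₂, rfl⟩ := splitmem top p T D c hc hx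
    refine le_trans (iInf₂_le ℓ' (Finset.mem_range.mpr (Nat.lt_succ_of_le hℓ'))) ?_
    refine le_trans (iInf₂_le d' (Finset.mem_range.mpr (Nat.lt_succ_of_le hd'))) ?_
    refine le_trans (iInf₂_le a' (Finset.mem_range.mpr (Nat.lt_succ_of_le ha'))) ?_
    rw [H_eq, H_eq]
    exact add_le_add (sInf_le hx₁) (sInf_le hx₂)


end Stmt11
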